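/- For fixed y ∈ ℝ and a ∈ ℝ, the function s ↦ (y − a)²/Λ(s) + Λ(s) is convex on ℝ, where Λ(x) = log(1 + exp(x)). -/

import Mathlib

open Real

theorem stmt14 (y a : ℝ) :
    ConvexOn ℝ Set.univ
      (fun s : ℝ => (y - a) ^ 2 / Real.log (1 + Real.exp s) + Real.log (1 + Real.exp s)) := by
  set c := (y - a) ^ 2 with hc
  have hc0 : 0 ≤ c := sq_nonneg _
  have hE : ∀ s : ℝ, (0:ℝ) < 1 + exp s := fun s => by positivity
  have hLpos : ∀ s : ℝ, 0 < log (1 + exp s) := fun s =>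
    Real.log_pos (by have := exp_pos s; linarith)
  set L : ℝ → ℝ := fun s => log (1 + exp s) with hLdef
  set σ : ℝ → ℝ := fun s => exp s / (1 + exp s) with hσdef
  have hΛ : ∀ s : ℝ, HasDerivAt L (σ s) s := by
    intro s
    have h1 : HasDerivAt (fun s : ℝ => 1 + exp s) (exp s) s :=
      (Real.hasDerivAt_exp s).const_add 1
    exact h1.log (ne_of_gt (hE s))
  set g : ℝ → ℝ := fun s => σ s - c * σ s / (L s) ^ 2 with hgdef
  have hf : ∀ s : ℝ, HasDerivAt (fun s => c / L s + L s) (g s) s := by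
    intro s
    have h1 : HasDerivAt (fun s => c / L s) (-(c * σ s) / (L s) ^ 2) s := by
      have h2 : HasDerivAt (fun s => (L s)⁻¹) (-(σ s) / (L s) ^ 2) s :=
        (hΛ s).inv (ne_of_gt (hLpos s))
      have h3 := h2.const_mul c
      simp only [div_eq_mul_inv] at *
      refine h3.congr_deriv ?_
      ring
    have := h1.add (hΛ s)
    refine this.congr_deriv ?_
    simp only [hgdef]
    ring
  -- derivative of σ
  set σ' : ℝ → ℝ := fun s => exp s / (1 + exp s) ^ 2 with hσ'def
  have hσd : ∀ s : ℝ, HasDerivAt σ (σ' s) s := by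
    intro s
    have h1 : HasDerivAt (fun s : ℝ => 1 + exp s) (exp s) s :=
      (Real.hasDerivAt_exp s).const_add 1
    have := (Real.hasDerivAt_exp s).div h1 (ne_of_gt (hE s))
    refine this.congr_deriv ?_
    simp only [hσ'def]
    congr 1
    ring
  -- second derivative
  set h2f : ℝ → ℝ := fun s =>
    σ' s - c * (σ' s * (L s) ^ 2 - σ s * (2 * L s * σ s)) / ((L s) ^ 2) ^ 2 with h2fdef
  have hg : ∀ s : ℝ, HasDerivAt g (h2f s) s := by
    intro s
    have hL2 : HasDerivAt (fun s => (L s) ^ 2) (2 * L s * σ s) s := by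
      have := (hΛ s).pow 2
      refine this.congr_deriv ?_
      ring
    have hnum : HasDerivAt (fun s => c * σ s) (c * σ' s) s := (hσd s).const_mul c
    have hq : HasDerivAt (fun s => c * σ s / (L s) ^ 2)
        ((c * σ' s * (L s) ^ 2 - c * σ s * (2 * L s * σ s)) / ((L s) ^ 2) ^ 2) s :=
      hnum.div hL2 (pow_ne_zero 2 (ne_of_gt (hLpos s)))
    have := (hσd s).sub hq
    refine this.congr_deriv ?_
    simp only [h2fdef]
    ring
  have key : ∀ s : ℝ, 0 ≤ h2f s := by
    intro s
    have hEp := exp_pos s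
    have hlog : L s ≤ exp s := by
      have := Real.log_le_sub_one_of_pos (hE s)
      simpa [hLdef] using this
    have hLp := hLpos s
    have hσp : 0 < σ s := by simp only [hσdef]; positivity
    have hσ'p : 0 < σ' s := by simp only [hσ'def]; positivity
    -- σ' s * L s ≤ 2 * σ s ^ 2
    have hkey : σ' s * L s ≤ 2 * σ s ^ 2 := by
      have h1 : σ' s * L s ≤ σ' s * exp s := by nlinarith
      have h2 : σ' s * exp s = σ s ^ 2 := by
        simp only [hσ'def, hσdef]
        field_simp
      nlinarith [sq_nonneg (σ s)]
    have hfrac : (σ' s * (L s) ^ 2 - σ s * (2 * L s * σ s)) / ((L s) ^ 2) ^ 2 ≤ 0 := by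
      apply div_nonpos_of_nonpos_of_nonneg
      · nlinarith
      · positivity
    have hm : c * ((σ' s * (L s) ^ 2 - σ s * (2 * L s * σ s)) / ((L s) ^ 2) ^ 2) ≤ 0 :=
      mul_nonpos_iff.mpr (Or.inl ⟨hc0, hfrac⟩)
    simp only [h2fdef]
    rw [mul_div_assoc]
    linarith
  -- conclude
  have hderiv1 : deriv (fun s => c / L s + L s) = g := funext fun s => (hf s).deriv
  have hderiv2 : deriv g = h2f := funext fun s => (hg s).deriv
  apply convexOn_of_deriv2_nonneg convex_univ
  · exact fun s _ => ((hf s).continuousAt).continuousWithinAt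
  · exact fun s _ => ((hf s).differentiableAt).differentiableWithinAt
  · intro s _
    rw [hderiv1]
    exact ((hg s).differentiableAt).differentiableWithinAt
  · intro s _
    simp only [Function.iterate_succ, Function.iterate_zero, Function.comp_apply, id_eq]
    rw [hderiv1, hderiv2]
    exact key s
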